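/- Let Ω be a semigroup, A an associative algebra, M an A-bimodule, and {T_α: M→A}_{α∈Ω} a family of linear maps. Equip A⊗k[Ω] with the associative product (a⊗α)(b⊗β) = ab⊗αβ and M⊗k[Ω] with the A⊗k[Ω]-bimodule structure (a⊗α)·(u⊗β) = (a·u)⊗αβ, (u⊗β)·(a⊗α) = (u·a)⊗βα. Then {T_α} is an O-operator family (i.e., T_α(u)T_β(v) = T_{αβ}(T_α(u)·v + u·T_β(v)) for all u,v,α,β) if and only if the single linear map T: M⊗k[Ω]→A⊗k[Ω], u⊗α ↦ T_α(u)⊗α, is an O-operator, i.e., T(x)T(y) = T(T(x)·y + x·T(y)) for all x,y∈M⊗k[Ω]. -/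

import Mathlib

open TensorProduct

/-- `{T_α}` is an O-operator family iff
`T : M⊗k[Ω] → A⊗k[Ω], u⊗α ↦ T_α(u)⊗α` is an O-operator for the induced
algebra and bimodule structures on `A⊗k[Ω]` and `M⊗k[Ω]`. -/
theorem oOperatorFamily_iff_oOperator
    {k Ω A M : Type*} [Field k] [Semigroup Ω] [NonUnitalRing A] [Module k A]
    [AddCommGroup M] [Module k M]
    (actL : A →ₗ[k] M →ₗ[k] M) (actR : M →ₗ[k] A →ₗ[k] M)
    (hb1 : ∀ (a b : A) (m : M), actL (a * b) m = actL a (actL b m))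
    (hb2 : ∀ (a : A) (m : M) (b : A), actR (actL a m) b = actL a (actR m b))
    (hb3 : ∀ (m : M) (a b : A), actR (actR m a) b = actR m (a * b))
    (T : Ω → M →ₗ[k] A)
    -- the associative product on `A ⊗ k[Ω]`
    (mulB : TensorProduct k A (MonoidAlgebra k Ω) →ₗ[k]
      TensorProduct k A (MonoidAlgebra k Ω) →ₗ[k] TensorProduct k A (MonoidAlgebra k Ω))
    (hmulB : ∀ (a b : A) (α β : Ω),
      mulB (a ⊗ₜ[k] MonoidAlgebra.single α 1) (b ⊗ₜ[k] MonoidAlgebra.single β 1)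
        = (a * b) ⊗ₜ[k] MonoidAlgebra.single (α * β) 1)
    -- the bimodule actions on `M ⊗ k[Ω]`
    (actLB : TensorProduct k A (MonoidAlgebra k Ω) →ₗ[k]
      TensorProduct k M (MonoidAlgebra k Ω) →ₗ[k] TensorProduct k M (MonoidAlgebra k Ω))
    (hactLB : ∀ (a : A) (u : M) (α β : Ω),
      actLB (a ⊗ₜ[k] MonoidAlgebra.single α 1) (u ⊗ₜ[k] MonoidAlgebra.single β 1)
        = (actL a u) ⊗ₜ[k] MonoidAlgebra.single (α * β) 1)
    (actRB : TensorProduct k M (MonoidAlgebra k Ω) →ₗ[k]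
      TensorProduct k A (MonoidAlgebra k Ω) →ₗ[k] TensorProduct k M (MonoidAlgebra k Ω))
    (hactRB : ∀ (u : M) (a : A) (β α : Ω),
      actRB (u ⊗ₜ[k] MonoidAlgebra.single β 1) (a ⊗ₜ[k] MonoidAlgebra.single α 1)
        = (actR u a) ⊗ₜ[k] MonoidAlgebra.single (β * α) 1)
    -- the assembled map `T : M⊗k[Ω] → A⊗k[Ω]`
    (That : TensorProduct k M (MonoidAlgebra k Ω) →ₗ[k]
      TensorProduct k A (MonoidAlgebra k Ω))
    (hThat : ∀ (u : M) (α : Ω),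
      That (u ⊗ₜ[k] MonoidAlgebra.single α 1) = (T α u) ⊗ₜ[k] MonoidAlgebra.single α 1) :
    (∀ (α β : Ω) (u v : M),
      T α u * T β v = T (α * β) (actL (T α u) v + actR u (T β v)))
      ↔ (∀ x y : TensorProduct k M (MonoidAlgebra k Ω),
        mulB (That x) (That y) = That (actLB (That x) y + actRB x (That y))) := by
  have hsF : ∀ (a : Ω) (b : k),
      (MonoidAlgebra.single a b : MonoidAlgebra k Ω) = b • MonoidAlgebra.single a 1 := by
    intro a b
    show MonoidAlgebra.single a b = b • MonoidAlgebra.single a (1 : k)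
    rw [MonoidAlgebra.smul_single', mul_one]
  constructor
  · intro h
    -- the identity on pure generator tensors
    have gen : ∀ (α β : Ω) (u v : M),
        mulB (That (u ⊗ₜ[k] MonoidAlgebra.single α 1)) (That (v ⊗ₜ[k] MonoidAlgebra.single β 1))
          = That (actLB (That (u ⊗ₜ[k] MonoidAlgebra.single α 1)) (v ⊗ₜ[k] MonoidAlgebra.single β 1)
              + actRB (u ⊗ₜ[k] MonoidAlgebra.single α 1) (That (v ⊗ₜ[k] MonoidAlgebra.single β 1))) := by
      intro α β u v
      rw [hThat, hThat, hmulB, hactLB, hactRB, ← add_tmul, hThat, h]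
    -- the identity on pure tensors (arbitrary coefficients in k[Ω])
    have base : ∀ (u v : M) (f g : MonoidAlgebra k Ω),
        mulB (That (u ⊗ₜ[k] f)) (That (v ⊗ₜ[k] g))
          = That (actLB (That (u ⊗ₜ[k] f)) (v ⊗ₜ[k] g)
              + actRB (u ⊗ₜ[k] f) (That (v ⊗ₜ[k] g))) := by
      intro u v f
      induction f using MonoidAlgebra.induction_linear with
      | zero => intro g; simp [TensorProduct.tmul_zero]
      | add f₁ f₂ h₁ h₂ =>
        intro g
        simp only [TensorProduct.tmul_add, map_add, LinearMap.add_apply, h₁ g, h₂ g]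
        abel
      | single a b =>
        intro g
        induction g using MonoidAlgebra.induction_linear with
        | zero => simp [TensorProduct.tmul_zero]
        | add g₁ g₂ k₁ k₂ =>
          simp only [TensorProduct.tmul_add, map_add, LinearMap.add_apply, k₁, k₂]
          abel
        | single c d =>
          rw [hsF a b, hsF c d, TensorProduct.tmul_smul, TensorProduct.tmul_smul]
          simp only [map_smul, LinearMap.smul_apply, LinearMap.map_smul, gen a c u v]
          simp [map_add, map_smul, smul_add]
    intro x y
    induction x using TensorProduct.induction_on with
    | zero => simp
    | tmul u f =>
      induction y using TensorProduct.induction_on with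
      | zero => simp
      | tmul v g => exact base u v f g
      | add y₁ y₂ hy₁ hy₂ =>
        simp only [map_add, LinearMap.add_apply, hy₁, hy₂]
        abel
    | add x₁ x₂ hx₁ hx₂ =>
      simp only [map_add, LinearMap.add_apply, hx₁, hx₂]
      abel
  · intro h α β u v
    have hx := h (u ⊗ₜ[k] MonoidAlgebra.single α 1) (v ⊗ₜ[k] MonoidAlgebra.single β 1)
    rw [hThat, hThat, hmulB, hactLB, hactRB, ← add_tmul, hThat] at hx
    -- extract the `A` component by applying `id ⊗ (evaluation at α*β)`
    have := congrArg (fun z => (TensorProduct.rid k A)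
      (LinearMap.lTensor A ((Finsupp.lapply (α * β)) ∘ₗ (MonoidAlgebra.coeffLinearEquiv k).toLinearMap :
        MonoidAlgebra k Ω →ₗ[k] k) z)) hx
    simpa [MonoidAlgebra.coeff_single, Finsupp.single_apply] using this
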